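/- Let M be a pointed metric space whose set M′ of cluster points has density character Γ for some infinite cardinal Γ. Then there is a linear subspace of SNA(M) isometrically isomorphic to c₀(Γ); i.e., there is a linear isometric embedding of c₀(Γ) into Lip₀(M) whose range consists of strongly norm-attaining functions. -/

import Mathlib

universe u

/-- `L` is the (least) Lipschitz norm of `f`. -/
def LipNormEq {M : Type*} [MetricSpace M] (f : M → ℝ) (L : ℝ) : Prop :=
  (∀ p q : M, |f p - f q| ≤ L * dist p q) ∧
  ∀ L' : ℝ, 0 ≤ L' → (∀ p q : M, |f p - f q| ≤ L' * dist p q) → L ≤ L'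

/-- The set of cluster (accumulation) points of `M`. -/
def accPts (M : Type u) [MetricSpace M] : Set M :=
  {x : M | x ∈ closure {y : M | y ≠ x}}

/-- The density character of a subset `s` of a metric space: the least cardinality of a
subset of `s` which is dense in `s`. -/
noncomputable def setDensChar {M : Type u} [MetricSpace M] (s : Set M) : Cardinal.{u} :=
  sInf {c : Cardinal.{u} | ∃ t : Set M, t ⊆ s ∧ s ⊆ closure t ∧ Cardinal.mk t = c}

namespace DevD
open Cardinal Metric Set

variable {M : Type u} [MetricSpace M]

local notation "D" => setDensChar (M := M)

lemma D_witness (s : Set M) : ∃ t : Set M, t ⊆ s ∧ s ⊆ closure t ∧ Cardinal.mk t = D s := by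
  have hne : {c : Cardinal.{u} | ∃ t : Set M, t ⊆ s ∧ s ⊆ closure t ∧ Cardinal.mk t = c}.Nonempty :=
    ⟨Cardinal.mk s, s, le_refl _, subset_closure, rfl⟩
  exact csInf_mem hne

lemma D_le_of_witness {s t : Set M} (h1 : t ⊆ s) (h2 : s ⊆ closure t) : D s ≤ Cardinal.mk t :=
  csInf_le (OrderBot.bddBelow _) ⟨t, h1, h2, rfl⟩

lemma D_empty : D (∅ : Set M) = 0 := by
  have := D_le_of_witness (s := (∅ : Set M)) (t := ∅) (le_refl _) (by simp)
  simpa using le_antisymm (by simpa using this) (zero_le)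

lemma D_union (s₁ s₂ : Set M) : D (s₁ ∪ s₂) ≤ D s₁ + D s₂ := by
  obtain ⟨t₁, ht₁, hd₁, hc₁⟩ := D_witness s₁
  obtain ⟨t₂, ht₂, hd₂, hc₂⟩ := D_witness s₂
  have h1 : t₁ ∪ t₂ ⊆ s₁ ∪ s₂ := union_subset_union ht₁ ht₂
  have h2 : s₁ ∪ s₂ ⊆ closure (t₁ ∪ t₂) := by
    intro x hx
    rcases hx with hx | hx
    · exact closure_mono subset_union_left (hd₁ hx)
    · exact closure_mono subset_union_right (hd₂ hx)
  calc D (s₁ ∪ s₂) ≤ Cardinal.mk ↥(t₁ ∪ t₂) := D_le_of_witness h1 h2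
    _ ≤ Cardinal.mk t₁ + Cardinal.mk t₂ := Cardinal.mk_union_le _ _
    _ = D s₁ + D s₂ := by rw [hc₁, hc₂]

lemma D_singleton (x : M) : D ({x} : Set M) ≤ 1 := by
  have := D_le_of_witness (s := ({x} : Set M)) (t := {x}) (le_refl _) subset_closure
  simpa using this

/-- key approximation lemma: if `s ⊆ closure T` then `D s ≤ ℵ₀ * #T`. -/
lemma D_le_of_subset_closure {s T : Set M} (h : s ⊆ closure T) :
    D s ≤ Cardinal.aleph0 * Cardinal.mk T := by
  classical
  -- pick function
  let g : T × ℕ → M := fun p =>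
    if h : (s ∩ ball (p.1 : M) (1 / (p.2 + 1))).Nonempty then h.choose else (p.1 : M)
  have hrange : ∀ y ∈ s, ∀ ε > (0:ℝ), ∃ p : T × ℕ, g p ∈ s ∧ dist y (g p) < ε := by
    intro y hy ε hε
    obtain ⟨n, hn⟩ := exists_nat_gt (2 / ε)
    have hn1 : (0:ℝ) < 1 / (n + 1) := by positivity
    have hyc := h hy
    rw [Metric.mem_closure_iff] at hyc
    obtain ⟨x, hxT, hxd⟩ := hyc _ hn1
    have hne : (s ∩ ball ((⟨x, hxT⟩ : T) : M) (1 / (n + 1))).Nonempty := by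
      exact ⟨y, hy, by simpa [dist_comm] using hxd⟩
    refine ⟨(⟨x, hxT⟩, n), ?_, ?_⟩
    · simp only [g, dif_pos hne]
      exact hne.choose_spec.1
    · simp only [g, dif_pos hne]
      have h2 := hne.choose_spec.2
      rw [mem_ball] at h2
      have h2' : dist (hne.choose) x < 1 / (n + 1) := h2
      have htr : dist y (hne.choose) ≤ dist y x + dist (hne.choose) x := dist_triangle_right _ _ _
      have h3 : 1 / ((n:ℝ) + 1) + 1 / ((n:ℝ) + 1) < ε := by
        have hne1 : (0:ℝ) < (n:ℝ) + 1 := by positivity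
        rw [← add_div, div_lt_iff₀ hne1]
        rw [div_lt_iff₀ hε] at hn
        nlinarith
      linarith
  set u : Set M := s ∩ range g with hu
  have h1 : u ⊆ s := inter_subset_left
  have h2 : s ⊆ closure u := by
    intro y hy
    rw [Metric.mem_closure_iff]
    intro ε hε
    obtain ⟨p, hps, hpd⟩ := hrange y hy ε hε
    exact ⟨g p, ⟨hps, mem_range_self _⟩, hpd⟩
  calc D s ≤ Cardinal.mk u := D_le_of_witness h1 h2
    _ ≤ Cardinal.mk (range g) := Cardinal.mk_le_mk_of_subset inter_subset_right
    _ ≤ Cardinal.mk (T × ℕ) := Cardinal.mk_range_le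
    _ = Cardinal.mk T * Cardinal.aleph0 := by
        rw [Cardinal.mk_prod, Cardinal.lift_uzero, Cardinal.mk_nat, Cardinal.lift_aleph0]
    _ = Cardinal.aleph0 * Cardinal.mk T := mul_comm _ _

lemma D_le_of_subset_closure' {s U : Set M} (h : s ⊆ closure U) :
    D s ≤ Cardinal.aleph0 * D U := by
  obtain ⟨t, ht, hd, hc⟩ := D_witness U
  have : s ⊆ closure t := by
    refine h.trans ?_
    rw [← closure_closure (s := t)]
    exact closure_mono hd
  simpa [hc] using D_le_of_subset_closure this

lemma D_mono_of_subset {s' s : Set M} (h : s' ⊆ s) : D s' ≤ Cardinal.aleph0 * D s :=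
  D_le_of_subset_closure' (h.trans subset_closure)

/-- countable union bound -/
lemma D_iUnion_nat (S : ℕ → Set M) :
    D (⋃ n, S n) ≤ Cardinal.aleph0 * ⨆ n, D (S n) := by
  classical
  choose t ht hd hc using fun n => D_witness (S n)
  have h1 : (⋃ n, t n) ⊆ ⋃ n, S n := iUnion_mono ht
  have h2 : (⋃ n, S n) ⊆ closure (⋃ n, t n) := by
    intro x hx
    obtain ⟨n, hn⟩ := mem_iUnion.1 hx
    exact closure_mono (subset_iUnion _ n) (hd n hn)
  refine (D_le_of_witness h1 h2).trans ?_
  have hl := Cardinal.mk_iUnion_le_lift (f := t)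
  simp only [Cardinal.lift_uzero, Cardinal.mk_nat, Cardinal.lift_aleph0] at hl
  refine hl.trans ?_
  refine mul_le_mul' le_rfl ?_
  exact ciSup_mono (Cardinal.bddAbove_range _) fun n => (hc n).le

/-- general small-index union bound -/
lemma D_iUnion {I : Type u} (S : I → Set M) :
    D (⋃ i, S i) ≤ Cardinal.mk I * ⨆ i, D (S i) := by
  classical
  choose t ht hd hc using fun i => D_witness (S i)
  have h1 : (⋃ i, t i) ⊆ ⋃ i, S i := iUnion_mono ht
  have h2 : (⋃ i, S i) ⊆ closure (⋃ i, t i) := by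
    intro x hx
    obtain ⟨i, hi⟩ := mem_iUnion.1 hx
    exact closure_mono (subset_iUnion _ i) (hd i hi)
  refine (D_le_of_witness h1 h2).trans ?_
  refine (Cardinal.mk_iUnion_le t).trans ?_
  exact mul_le_mul' le_rfl (ciSup_mono (Cardinal.bddAbove_range _) fun i => (hc i).le)



/-- maximal ε-separated subsets exist -/
lemma exists_maximal_net (S : Set M) {ε : ℝ} (hε : 0 < ε) :
    ∃ N : Set M, N ⊆ S ∧ N.Pairwise (fun a b => ε ≤ dist a b) ∧
      ∀ y ∈ S, ∃ x ∈ N, dist y x < ε := by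
  classical
  set 𝒮 : Set (Set M) := {N | N ⊆ S ∧ N.Pairwise (fun a b => ε ≤ dist a b)} with h𝒮
  have hzorn : ∀ c ⊆ 𝒮, IsChain (· ⊆ ·) c → ∃ ub ∈ 𝒮, ∀ s ∈ c, s ⊆ ub := by
    intro c hc hchain
    refine ⟨⋃₀ c, ⟨?_, ?_⟩, fun s hs => Set.subset_sUnion_of_mem hs⟩
    · exact Set.sUnion_subset fun s hs => (hc hs).1
    · intro a ha b hb hab
      obtain ⟨sa, hsa, has⟩ := ha
      obtain ⟨sb, hsb, hbs⟩ := hb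
      rcases hchain.total hsa hsb with hsub | hsub
      · exact (hc hsb).2 (hsub has) hbs hab
      · exact (hc hsa).2 has (hsub hbs) hab
  obtain ⟨N, hNmax⟩ := zorn_subset 𝒮 hzorn
  · obtain ⟨hNS, hNsep⟩ := hNmax.prop
    refine ⟨N, hNS, hNsep, ?_⟩
    intro y hy
    by_contra hcon
    push_neg at hcon
    have hyN : y ∉ N := fun hyN => by
      have := hcon y hyN
      simp [dist_self] at this
      linarith
    have hmem : insert y N ∈ 𝒮 := by
      constructor
      · exact Set.insert_subset hy hNS
      · intro a ha b hb hab
        rcases ha with rfl | ha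
        · rcases hb with rfl | hb
          · exact absurd rfl hab
          · exact hcon b hb
        · rcases hb with rfl | hb
          · rw [dist_comm]; exact hcon a ha
          · exact hNsep ha hb hab
    have hsub : insert y N ⊆ N := hNmax.2 hmem (Set.subset_insert _ _)
    exact hyN (hsub (Set.mem_insert _ _))



/-- a sequence of nets whose sizes control the density character -/
lemma D_le_sup_nets (S : Set M) :
    ∃ N : ℕ → Set M, (∀ n, N n ⊆ S) ∧
      (∀ n, (N n).Pairwise (fun a b => 1 / ((n:ℝ) + 1) ≤ dist a b)) ∧
      D S ≤ Cardinal.aleph0 * ⨆ n, Cardinal.mk (N n) := by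
  classical
  have h : ∀ n : ℕ, ∃ N : Set M, N ⊆ S ∧ N.Pairwise (fun a b => 1 / ((n:ℝ)+1) ≤ dist a b) ∧
      ∀ y ∈ S, ∃ x ∈ N, dist y x < 1 / ((n:ℝ)+1) := by
    intro n
    exact exists_maximal_net S (by positivity)
  choose N hNS hsep hnet using h
  refine ⟨N, hNS, hsep, ?_⟩
  have h2 : S ⊆ closure (⋃ n, N n) := by
    intro y hy
    rw [Metric.mem_closure_iff]
    intro ε hε
    obtain ⟨n, hn⟩ := exists_nat_gt (1 / ε)
    obtain ⟨x, hxN, hxd⟩ := hnet n y hy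
    refine ⟨x, Set.mem_iUnion.2 ⟨n, hxN⟩, hxd.trans_le ?_⟩
    rw [div_le_iff₀ (by positivity)]
    rw [div_lt_iff₀ hε] at hn
    nlinarith
  have h1 := D_le_of_witness (Set.iUnion_subset hNS) h2
  refine h1.trans ?_
  have hl := Cardinal.mk_iUnion_le_lift (f := N)
  simp only [Cardinal.lift_uzero, Cardinal.mk_nat, Cardinal.lift_aleph0] at hl
  exact hl

/-- In a set of regular uncountable density, there is a large uniformly separated subset. -/
lemma exists_separated_of_regular {S : Set M} {μ : Cardinal.{u}} (hreg : μ.IsRegular)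
    (hμ : Cardinal.aleph0 < μ) (hD : μ ≤ D S) :
    ∃ (ε : ℝ) (N : Set M), 0 < ε ∧ N ⊆ S ∧ N.Pairwise (fun a b => ε ≤ dist a b) ∧
      μ ≤ Cardinal.mk N := by
  obtain ⟨N, hNS, hsep, hle⟩ := D_le_sup_nets S
  by_contra hcon
  push_neg at hcon
  have hall : ∀ n, Cardinal.mk (N n) < μ := by
    intro n
    exact hcon (1 / ((n:ℝ)+1)) (N n) (by positivity) (hNS n) (hsep n)
  have hsup : (⨆ n, Cardinal.mk (N n)) < μ := by
    refine Cardinal.iSup_lt_lift_of_isRegular hreg ?_ hall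
    simpa using hμ
  have : D S < μ := by
    refine lt_of_le_of_lt hle ?_
    rcases le_total (⨆ n, Cardinal.mk (N n)) Cardinal.aleph0 with hc1 | hc1
    · calc Cardinal.aleph0 * ⨆ n, Cardinal.mk (N n) ≤ Cardinal.aleph0 * Cardinal.aleph0 :=
            mul_le_mul' le_rfl hc1
        _ = Cardinal.aleph0 := by simp
        _ < μ := hμ
    · rw [Cardinal.aleph0_mul_eq hc1]; exact hsup
  exact absurd hD (not_le.2 this)

/-- separated family predicate -/
def IsSepFam (A : Set M) (F : Set (M × ℝ)) : Prop :=
  (∀ z ∈ F, z.1 ∈ A ∧ 0 < z.2) ∧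
  ∀ z ∈ F, ∀ w ∈ F, z ≠ w → z.2 + w.2 ≤ dist z.1 w.1

structure CState (A : Set M) where
  chosen : Finset (M × ℝ)
  R : Set M
  cc : ℝ
  hR : R ⊆ A
  hRinf : R.Infinite
  hc : 0 < cc
  hwf : ∀ z ∈ chosen, z.1 ∈ A ∧ 0 < z.2
  hsep : ∀ z ∈ chosen, ∀ w ∈ chosen, z ≠ w → z.2 + w.2 ≤ dist z.1 w.1
  hclear : ∀ q ∈ R, ∀ z ∈ chosen, z.2 + cc ≤ dist q z.1

lemma cstate_step {A : Set M} (s : CState A) :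
    ∃ s' : CState A, s.chosen ⊆ s'.chosen ∧ s'.chosen.card = s.chosen.card + 1 := by
  classical
  obtain ⟨u, hu, v, hv, huv⟩ := s.hRinf.nontrivial
  set ρ : ℝ := min (dist u v) s.cc with hρdef
  have hρ : 0 < ρ := lt_min (dist_pos.2 huv) s.hc
  have hρc : ρ ≤ s.cc := min_le_right _ _
  have hρuv : ρ ≤ dist u v := min_le_left _ _
  have hnewnotin : ∀ p ∈ s.R, ∀ r : ℝ, 0 < r → (p, r) ∉ s.chosen := by
    intro p hp r hr hmem
    have := s.hclear p hp (p, r) hmem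
    simp only [dist_self] at this
    linarith [s.hc]
  have hbuild : ∀ (p : M), p ∈ s.R → ∀ (R' : Set M), R' ⊆ s.R → R'.Infinite →
      (∀ q ∈ R', ρ/4 ≤ dist q p) → ∃ s' : CState A, s.chosen ⊆ s'.chosen ∧
        s'.chosen.card = s.chosen.card + 1 := by
    intro p hp R' hR's hR'inf hfar
    have hsepnew : ∀ z ∈ s.chosen, z.2 + ρ/8 ≤ dist z.1 p := by
      intro z hz
      have h1 := s.hclear p hp z hz
      rw [dist_comm]
      linarith
    refine ⟨⟨insert (p, ρ/8) s.chosen, R', ρ/8, hR's.trans s.hR, hR'inf, by positivity,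
        ?_, ?_, ?_⟩, Finset.subset_insert _ _, ?_⟩
    · intro z hz
      rcases Finset.mem_insert.1 hz with rfl | hz
      · exact ⟨s.hR hp, by positivity⟩
      · exact s.hwf z hz
    · intro z hz w hw hzw
      rcases Finset.mem_insert.1 hz with rfl | hz <;> rcases Finset.mem_insert.1 hw with rfl | hw
      · exact absurd rfl hzw
      · have := hsepnew w hw
        have hg : ρ/8 + w.2 ≤ dist p w.1 := by rw [dist_comm]; linarith
        exact hg
      · have := hsepnew z hz
        exact by linarith
      · exact s.hsep z hz w hw hzw
    · intro q hq z hz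
      rcases Finset.mem_insert.1 hz with rfl | hz
      · have := hfar q hq
        show ρ/8 + ρ/8 ≤ dist q p
        linarith
      · have := s.hclear q (hR's hq) z hz
        linarith
    · rw [Finset.card_insert_of_notMem (hnewnotin p hp _ (by positivity))]
  by_cases hcase : (s.R ∩ Metric.ball u (ρ/4)).Infinite
  · refine hbuild v hv (s.R ∩ Metric.ball u (ρ/4)) Set.inter_subset_left hcase ?_
    intro q hq
    have h1 : dist q u < ρ/4 := Metric.mem_ball.1 hq.2
    have h3 : dist u v ≤ dist u q + dist q v := dist_triangle _ _ _
    rw [dist_comm u q] at h3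
    linarith
  · refine hbuild u hu (s.R \ Metric.ball u (ρ/4)) Set.diff_subset ?_ ?_
    · have hsplit : s.R ⊆ (s.R ∩ Metric.ball u (ρ/4)) ∪ (s.R \ Metric.ball u (ρ/4)) := by
        intro q hq
        by_cases h : q ∈ Metric.ball u (ρ/4)
        · exact Or.inl ⟨hq, h⟩
        · exact Or.inr ⟨hq, h⟩
      by_contra hcon
      exact s.hRinf (Set.Finite.subset ((Set.not_infinite.1 hcase).union
        (Set.not_infinite.1 hcon)) hsplit)
    · intro q hq
      have := hq.2
      rw [Metric.mem_ball, not_lt] at this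
      exact this

lemma exists_sepFam_of_infinite {A : Set M} (hA : A.Infinite) :
    ∃ F : Set (M × ℝ), IsSepFam A F ∧ Cardinal.aleph0 ≤ Cardinal.mk F := by
  classical
  let st0 : CState A := ⟨∅, A, 1, le_refl _, hA, one_pos, by simp, by simp, by simp⟩
  let st : ℕ → CState A := fun k => Nat.rec st0 (fun _ s => (cstate_step s).choose) k
  have hstep : ∀ k, (st k).chosen ⊆ (st (k+1)).chosen ∧
      (st (k+1)).chosen.card = (st k).chosen.card + 1 := fun k => (cstate_step (st k)).choose_spec
  have hcard : ∀ k, (st k).chosen.card = k := by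
    intro k
    induction k with
    | zero => simp [st, st0]
    | succ n ih => rw [(hstep n).2, ih]
  have hmono : ∀ k l, k ≤ l → (st k).chosen ⊆ (st l).chosen := by
    intro k l hkl
    induction l, hkl using Nat.le_induction with
    | base => exact Finset.Subset.refl _
    | succ n _ ih => exact ih.trans (hstep n).1
  refine ⟨⋃ k, ((st k).chosen : Set (M × ℝ)), ⟨?_, ?_⟩, ?_⟩
  · intro z hz
    obtain ⟨k, hk⟩ := Set.mem_iUnion.1 hz
    exact (st k).hwf z hk
  · intro z hz w hw hzw
    obtain ⟨k, hk⟩ := Set.mem_iUnion.1 hz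
    obtain ⟨l, hl⟩ := Set.mem_iUnion.1 hw
    rcases le_total k l with h | h
    · exact (st l).hsep z (hmono k l h hk) w hl hzw
    · exact (st k).hsep z hk w (hmono l k h hl) hzw
  · rw [Cardinal.aleph0_le_mk_iff, Set.infinite_coe_iff]
    intro hfin
    have hsub : ((st (hfin.toFinset.card + 1)).chosen : Set (M × ℝ)) ⊆ ⋃ k, ((st k).chosen : Set (M × ℝ)) :=
      Set.subset_iUnion (fun k => ((st k).chosen : Set (M × ℝ))) (hfin.toFinset.card + 1)
    have hle := Finset.card_le_card (fun x hx => hfin.mem_toFinset.2 (hsub hx))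
    have h2 := hcard (hfin.toFinset.card + 1)
    omega

lemma D_le_mk (s : Set M) : D s ≤ Cardinal.mk s := D_le_of_witness subset_rfl subset_closure

lemma le_of_aleph0_mul {Γ c : Cardinal.{u}} (hΓ : Cardinal.aleph0 < Γ)
    (h : Γ ≤ Cardinal.aleph0 * c) : Γ ≤ c := by
  rcases le_total c Cardinal.aleph0 with hc | hc
  · exfalso
    have : Cardinal.aleph0 * c ≤ Cardinal.aleph0 * Cardinal.aleph0 := mul_le_mul' le_rfl hc
    simp only [Cardinal.aleph0_mul_aleph0] at this
    exact absurd (h.trans this) (not_le.2 hΓ)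
  · rwa [Cardinal.aleph0_mul_eq hc] at h

lemma le_of_add_lt {Γ a b : Cardinal.{u}} (hΓ : Cardinal.aleph0 ≤ Γ)
    (h : Γ ≤ a + b) (hb : b < Γ) : Γ ≤ a := by
  by_contra hcon
  exact absurd h (not_le.2 (Cardinal.add_lt_of_lt hΓ (not_le.1 hcon) hb))

lemma exists_lt_of_lt_iSup {Γ d : Cardinal.{u}} {g : ℕ → Cardinal.{u}}
    (h : Γ ≤ ⨆ n, g n) (hd : d < Γ) : ∃ n, d < g n := by
  by_contra hcon
  push_neg at hcon
  exact absurd (h.trans (ciSup_le hcon)) (not_le.2 hd)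

lemma casea {A : Set M} {Γ : Cardinal.{u}} (hΓ : Γ = D A) (hΓinf : Cardinal.aleph0 < Γ)
    (μ : ℕ → Cardinal.{u}) (hμreg : ∀ k, (μ k).IsRegular) (hμinf : ∀ k, Cardinal.aleph0 < μ k)
    (hμΓ : ∀ k, μ k < Γ) (hμsup : Γ ≤ ⨆ k, μ k)
    (x : M) (hx : ∀ ρ : ℝ, 0 < ρ → Γ ≤ D (Metric.ball x ρ ∩ A)) :
    ∃ F : Set (M × ℝ), IsSepFam A F ∧ Γ ≤ Cardinal.mk F := by
  classical
  set inn : ℕ → ℝ := fun j => (4:ℝ)⁻¹ ^ (j+1) with hinn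
  set out : ℕ → ℝ := fun j => 4 * (4:ℝ)⁻¹ ^ j with hout
  have hinnpos : ∀ j, 0 < inn j := fun j => by positivity
  have hio : ∀ j, inn j < out j := by
    intro j
    have h1 : (4:ℝ)⁻¹ ^ (j+1) = (4:ℝ)⁻¹ * (4:ℝ)⁻¹ ^ j := by ring
    have h2 : (0:ℝ) < (4:ℝ)⁻¹ ^ j := by positivity
    rw [hinn, hout]
    simp only []
    rw [h1]
    nlinarith
  set Ann : ℕ → Set M := fun j => {y ∈ A | inn j < dist y x ∧ dist y x < out j} with hAnn
  have hAnnA : ∀ j, Ann j ⊆ A := fun j y hy => hy.1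
  have hAnnDisj : ∀ a b, a + 2 ≤ b → ∀ y, y ∈ Ann a → y ∈ Ann b → False := by
    intro a b hab y hya hyb
    have h1 : out b ≤ inn a := by
      rw [hout, hinn]
      simp only []
      have : (4:ℝ)⁻¹ ^ b ≤ (4:ℝ)⁻¹ ^ (a+2) :=
        pow_le_pow_of_le_one (by norm_num) (by norm_num) hab
      have h2 : 4 * (4:ℝ)⁻¹ ^ (a+2) = (4:ℝ)⁻¹ ^ (a+1) := by ring
      nlinarith
    exact absurd (hyb.2.2.trans_le h1) (not_lt.2 hya.2.1.le)
  -- covering of small punctured balls by annuli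
  have hcover : ∀ J : ℕ, (Metric.ball x ((4:ℝ)⁻¹ ^ J) ∩ A) \ {x} ⊆ ⋃ i : ℕ, Ann (J + i) := by
    intro J y hy
    obtain ⟨⟨hyb, hyA⟩, hyx⟩ := hy
    have hyx' : y ≠ x := hyx
    have hd : 0 < dist y x := dist_pos.2 hyx'
    have hdb : dist y x < (4:ℝ)⁻¹ ^ J := Metric.mem_ball.1 hyb
    have hex : ∃ i : ℕ, (4:ℝ)⁻¹ ^ (J + i + 1) < dist y x := by
      obtain ⟨m, hm⟩ := exists_pow_lt_of_lt_one hd (by norm_num : (4:ℝ)⁻¹ < 1)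
      refine ⟨m, lt_of_le_of_lt ?_ hm⟩
      exact pow_le_pow_of_le_one (by norm_num) (by norm_num) (by omega)
    set i₀ := Nat.find hex with hi₀
    have hspec := Nat.find_spec hex
    refine Set.mem_iUnion.2 ⟨i₀, hyA, hspec, ?_⟩
    rcases Nat.eq_zero_or_pos i₀ with h0 | hpos
    · rw [h0]
      have : (4:ℝ)⁻¹ ^ J < 4 * (4:ℝ)⁻¹ ^ (J + 0) := by
        have : (0:ℝ) < (4:ℝ)⁻¹ ^ J := by positivity
        simp only [Nat.add_zero]
        nlinarith
      exact hdb.trans this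
    · have hmin := Nat.find_min hex (Nat.sub_lt hpos one_pos)
      push_neg at hmin
      have heq : J + (i₀ - 1) + 1 = J + i₀ := by omega
      rw [heq] at hmin
      calc dist y x ≤ (4:ℝ)⁻¹ ^ (J + i₀) := hmin
        _ < 4 * (4:ℝ)⁻¹ ^ (J + i₀) := by
            have : (0:ℝ) < (4:ℝ)⁻¹ ^ (J + i₀) := by positivity
            nlinarith
  -- annuli have large density cofinally
  have hbig : ∀ J : ℕ, ∀ d : Cardinal.{u}, d < Γ → ∃ j, J ≤ j ∧ d < D (Ann j) := by
    intro J d hd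
    have h1 : Γ ≤ D (Metric.ball x ((4:ℝ)⁻¹ ^ J) ∩ A) := hx _ (by positivity)
    set S := Metric.ball x ((4:ℝ)⁻¹ ^ J) ∩ A with hS
    have h2 : D S ≤ D (S \ {x}) + D (S ∩ {x}) := by
      have : S = (S \ {x}) ∪ (S ∩ {x}) := (Set.diff_union_inter S {x}).symm
      calc D S = D ((S \ {x}) ∪ (S ∩ {x})) := by rw [← this]
        _ ≤ _ := D_union _ _
    have h3 : D (S ∩ {x}) ≤ 1 := by
      refine (D_le_mk _).trans ?_
      have := Cardinal.mk_le_mk_of_subset (Set.inter_subset_right : S ∩ {x} ⊆ {x})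
      simpa using this
    have h4 : Γ ≤ D (S \ {x}) := by
      refine le_of_add_lt hΓinf.le (h1.trans h2) ?_
      exact h3.trans_lt (lt_of_le_of_lt (by simpa using Cardinal.one_le_aleph0) hΓinf)
    have h5 : D (S \ {x}) ≤ Cardinal.aleph0 * D (⋃ i : ℕ, Ann (J + i)) :=
      D_le_of_subset_closure' ((hcover J).trans subset_closure)
    have h6 : D (⋃ i : ℕ, Ann (J + i)) ≤ Cardinal.aleph0 * ⨆ i, D (Ann (J + i)) :=
      D_iUnion_nat _
    have h7 : Γ ≤ ⨆ i : ℕ, D (Ann (J + i)) := by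
      refine le_of_aleph0_mul hΓinf (le_of_aleph0_mul hΓinf ?_)
      exact h4.trans (h5.trans (mul_le_mul' le_rfl h6))
    obtain ⟨i, hi⟩ := exists_lt_of_lt_iSup h7 hd
    exact ⟨J + i, Nat.le_add_right _ _, hi⟩
  -- recursively choose annulus indices with gaps
  set f : ℕ → ℕ := fun k => Nat.rec (hbig 0 (μ 0) (hμΓ 0)).choose
      (fun k jk => (hbig (jk + 2) (μ (k+1)) (hμΓ (k+1))).choose) k with hf
  have hf0 : μ 0 < D (Ann (f 0)) := (hbig 0 (μ 0) (hμΓ 0)).choose_spec.2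
  have hfstep : ∀ k, f k + 2 ≤ f (k+1) ∧ μ (k+1) < D (Ann (f (k+1))) := by
    intro k
    exact (hbig (f k + 2) (μ (k+1)) (hμΓ (k+1))).choose_spec
  have hfD : ∀ k, μ k < D (Ann (f k)) := by
    intro k
    cases k with
    | zero => exact hf0
    | succ n => exact (hfstep n).2
  have hgap : ∀ k l, k < l → f k + 2 ≤ f l := by
    intro k l hkl
    induction l, hkl using Nat.le_induction with
    | base => exact (hfstep k).1
    | succ n hn ih => exact ih.trans (le_trans (Nat.le_add_right _ 2) (hfstep n).1)
  -- nets inside each chosen annulus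
  have hnets : ∀ k, ∃ (ε : ℝ) (N : Set M), 0 < ε ∧ N ⊆ Ann (f k) ∧
      N.Pairwise (fun a b => ε ≤ dist a b) ∧ μ k ≤ Cardinal.mk N := by
    intro k
    obtain ⟨ε, N, h1, h2, h3, h4⟩ := exists_separated_of_regular (hμreg k) (hμinf k) (hfD k).le
    exact ⟨ε, N, h1, h2, h3, h4⟩
  choose εf Nf hεf hNf hNsep hNmk using hnets
  set rad : ℕ → M → ℝ := fun k p =>
    (1/4) * min (εf k) (min (dist p x - inn (f k)) (out (f k) - dist p x)) with hrad
  have hradpos : ∀ k p, p ∈ Ann (f k) → 0 < rad k p := by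
    intro k p hp
    have h1 := hp.2.1
    have h2 := hp.2.2
    have := hεf k
    rw [hrad]
    simp only []
    have : 0 < min (εf k) (min (dist p x - inn (f k)) (out (f k) - dist p x)) := by
      apply lt_min this
      apply lt_min <;> linarith
    linarith
  have hradε : ∀ k p, rad k p ≤ εf k / 4 := by
    intro k p
    rw [hrad]
    simp only []
    have := min_le_left (εf k) (min (dist p x - inn (f k)) (out (f k) - dist p x))
    linarith
  -- points outside the annulus are at distance ≥ 2 * rad
  have hclear : ∀ k p, p ∈ Ann (f k) → ∀ y, y ∈ A → y ∉ Ann (f k) → 2 * rad k p ≤ dist p y := by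
    intro k p hp y hyA hyn
    by_contra hcon
    push_neg at hcon
    apply hyn
    have hm1 : min (εf k) (min (dist p x - inn (f k)) (out (f k) - dist p x)) ≤
        dist p x - inn (f k) := le_trans (min_le_right _ _) (min_le_left _ _)
    have hm2 : min (εf k) (min (dist p x - inn (f k)) (out (f k) - dist p x)) ≤
        out (f k) - dist p x := le_trans (min_le_right _ _) (min_le_right _ _)
    have hreq : rad k p = 1/4 * min (εf k) (min (dist p x - inn (f k)) (out (f k) - dist p x)) := rfl
    have hr1 : 4 * rad k p ≤ dist p x - inn (f k) := by rw [hreq]; linarith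
    have hr2 : 4 * rad k p ≤ out (f k) - dist p x := by rw [hreq]; linarith
    have htr1 : dist p x ≤ dist p y + dist y x := dist_triangle _ _ _
    have htr2 : dist y x ≤ dist y p + dist p x := dist_triangle _ _ _
    rw [dist_comm y p] at htr2
    have hrp : 0 < rad k p := hradpos k p hp
    refine ⟨hyA, ?_, ?_⟩
    · linarith
    · linarith
  -- the family
  set F : Set (M × ℝ) := ⋃ k, (fun p => (p, rad k p)) '' (Nf k) with hF
  have hmemF : ∀ z ∈ F, ∃ k p, p ∈ Nf k ∧ z = (p, rad k p) := by
    intro z hz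
    obtain ⟨k, hk⟩ := Set.mem_iUnion.1 hz
    obtain ⟨p, hp, hpz⟩ := hk
    exact ⟨k, p, hp, hpz.symm⟩
  have hcross : ∀ k l p q, k ≠ l → p ∈ Nf k → q ∈ Nf l → 2 * rad k p ≤ dist p q := by
    intro k l p q hkl hp hq
    have hpA := hNf k hp
    have hqA := hNf l hq
    refine hclear k p hpA q (hAnnA _ hqA) ?_
    intro hqk
    rcases Nat.lt_or_ge k l with h | h
    · exact hAnnDisj (f k) (f l) (hgap k l h) q hqk hqA
    · have hlk : l < k := lt_of_le_of_ne h (Ne.symm hkl)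
      exact hAnnDisj (f l) (f k) (hgap l k hlk) q hqA hqk
  refine ⟨F, ⟨?_, ?_⟩, ?_⟩
  · intro z hz
    obtain ⟨k, p, hp, rfl⟩ := hmemF z hz
    exact ⟨(hNf k hp).1, hradpos k p (hNf k hp)⟩
  · intro z hz w hw hzw
    obtain ⟨k, p, hp, rfl⟩ := hmemF z hz
    obtain ⟨l, q, hq, rfl⟩ := hmemF w hw
    by_cases hkl : k = l
    · subst hkl
      have hpq : p ≠ q := by
        intro h; subst h; exact hzw rfl
      have hd : εf k ≤ dist p q := hNsep k hp hq hpq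
      have h1 := hradε k p
      have h2 := hradε k q
      have h0 := hεf k
      show rad k p + rad k q ≤ dist p q
      linarith
    · have h1 := hcross k l p q hkl hp hq
      have h2 := hcross l k q p (Ne.symm hkl) hq hp
      rw [dist_comm q p] at h2
      show rad k p + rad l q ≤ dist p q
      linarith
  · refine hμsup.trans (ciSup_le ?_)
    intro k
    refine (hNmk k).trans ?_
    have hinj : Function.Injective (fun p : M => (p, rad k p)) := by
      intro a b hab
      exact congrArg Prod.fst hab
    calc Cardinal.mk (Nf k) = Cardinal.mk ((fun p => (p, rad k p)) '' (Nf k)) :=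
          (Cardinal.mk_image_eq_of_injOn _ _ (hinj.injOn)).symm
      _ ≤ Cardinal.mk F := Cardinal.mk_le_mk_of_subset (Set.subset_iUnion (fun k => (fun p => (p, rad k p)) '' Nf k) k)



lemma caseb {A : Set M} {Γ : Cardinal.{u}} (hΓ : Γ = D A) (hΓinf : Cardinal.aleph0 < Γ)
    (μ : ℕ → Cardinal.{u}) (hμreg : ∀ k, (μ k).IsRegular) (hμinf : ∀ k, Cardinal.aleph0 < μ k)
    (hμΓ : ∀ k, μ k < Γ) (hμsup : Γ ≤ ⨆ k, μ k)
    (ν : ℕ → Cardinal.{u}) (hνinf : ∀ n, Cardinal.aleph0 ≤ ν n) (hνΓ : ∀ n, ν n < Γ)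
    (hνcof : ∀ d : Cardinal.{u}, d < Γ → ∃ n, d ≤ ν n)
    (hx : ∀ y : M, ∃ ρ : ℝ, 0 < ρ ∧ D (Metric.ball y ρ ∩ A) < Γ) :
    ∃ F : Set (M × ℝ), IsSepFam A F ∧ Γ ≤ Cardinal.mk F := by
  classical
  set Inv : Set (M × ℝ) → Set M → Prop := fun F U =>
    (∀ z ∈ F, z.1 ∈ A ∧ 0 < z.2 ∧ (Metric.ball z.1 (2*z.2) ∩ A ⊆ U) ∧ z.1 ∈ U) ∧
    (∀ z ∈ F, ∀ w ∈ F, z ≠ w → z.2 + w.2 ≤ dist z.1 w.1) ∧ D U < Γ with hInvDef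
  have bstep : ∀ (F : Set (M × ℝ)) (U : Set M), Inv F U → ∀ k : ℕ,
      ∃ (F' : Set (M × ℝ)) (U' : Set M), Inv F' U' ∧ F ⊆ F' ∧ μ k ≤ Cardinal.mk F' := by
    intro F U hInv k
    obtain ⟨hwf, hsep, hDU⟩ := hInv
    set V : Set M := A \ closure U with hV
    have hDV : Γ ≤ D V := by
      have hA_eq : A = V ∪ (A ∩ closure U) := by
        rw [hV, Set.diff_union_inter]
      have h1 : D A ≤ D V + D (A ∩ closure U) := by
        conv_lhs => rw [hA_eq]
        exact D_union _ _
      have h2 : D (A ∩ closure U) ≤ Cardinal.aleph0 * D U :=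
        D_le_of_subset_closure' Set.inter_subset_right
      have h3 : Cardinal.aleph0 * D U < Γ :=
        Cardinal.mul_lt_of_lt hΓinf.le hΓinf hDU
      exact le_of_add_lt hΓinf.le (hΓ.le.trans h1) (h2.trans_lt h3)
    set Vn : ℕ → Set M := fun n => {y ∈ V | ∃ ρ : ℝ, 0 < ρ ∧
        D (Metric.ball y ρ ∩ A) ≤ ν n ∧ Metric.ball y ρ ∩ closure U = ∅} with hVn
    have hVcov : V ⊆ ⋃ n, Vn n := by
      intro y hy
      obtain ⟨ρ₀, hρ₀, hρ₀D⟩ := hx y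
      have hyopen : y ∈ (closure U)ᶜ := hy.2
      obtain ⟨δ, hδ, hδsub⟩ := Metric.isOpen_iff.1 (isClosed_closure (s := U)).isOpen_compl y hyopen
      set ρ : ℝ := min ρ₀ δ with hρdef
      have hρ : 0 < ρ := lt_min hρ₀ hδ
      have hd1 : D (Metric.ball y ρ ∩ A) ≤ Cardinal.aleph0 * D (Metric.ball y ρ₀ ∩ A) :=
        D_mono_of_subset (Set.inter_subset_inter_left _ (Metric.ball_subset_ball (min_le_left _ _)))
      have hd2 : Cardinal.aleph0 * D (Metric.ball y ρ₀ ∩ A) < Γ :=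
        Cardinal.mul_lt_of_lt hΓinf.le hΓinf hρ₀D
      obtain ⟨n, hn⟩ := hνcof _ hd2
      refine Set.mem_iUnion.2 ⟨n, hy, ρ, hρ, (hd1.trans hn), ?_⟩
      rw [Set.eq_empty_iff_forall_notMem]
      intro w hw
      exact hδsub (Metric.ball_subset_ball (min_le_right _ _) hw.1) hw.2
    have hsupVn : Γ ≤ ⨆ n, D (Vn n) := by
      refine le_of_aleph0_mul hΓinf (le_of_aleph0_mul hΓinf ?_)
      have h1 : D V ≤ Cardinal.aleph0 * D (⋃ n, Vn n) :=
        D_le_of_subset_closure' (hVcov.trans subset_closure)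
      exact hDV.trans (h1.trans (mul_le_mul' le_rfl (D_iUnion_nat _)))
    obtain ⟨n, hn⟩ := exists_lt_of_lt_iSup hsupVn (hμΓ k)
    obtain ⟨ε, N, hε, hNVn, hNsep, hNmk⟩ :=
      exists_separated_of_regular (hμreg k) (hμinf k) hn.le
    obtain ⟨N₁, hN₁N, hN₁mk⟩ := Cardinal.le_mk_iff_exists_subset.1 hNmk
    set P : M → Prop := fun p => ∃ ρ : ℝ, 0 < ρ ∧
        D (Metric.ball p ρ ∩ A) ≤ ν n ∧ Metric.ball p ρ ∩ closure U = ∅ with hP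
    set rch : M → ℝ := fun p => if h : P p then min (ε/4) (h.choose/4) else 1 with hrch
    have hrspec : ∀ p, P p → 0 < rch p ∧ rch p ≤ ε/4 ∧
        D (Metric.ball p (2 * rch p) ∩ A) ≤ ν n ∧ Metric.ball p (2 * rch p) ∩ closure U = ∅ := by
      intro p hp
      obtain ⟨hρpos, hρD, hρU⟩ := hp.choose_spec
      have hrdef : rch p = min (ε/4) (hp.choose/4) := by rw [hrch]; simp only [dif_pos hp]
      have h1 : 0 < rch p := by rw [hrdef]; exact lt_min (by linarith) (by linarith)
      have h2 : rch p ≤ ε/4 := by rw [hrdef]; exact min_le_left _ _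
      have hsubρ : Metric.ball p (2 * rch p) ⊆ Metric.ball p hp.choose := by
        apply Metric.ball_subset_ball
        have := min_le_right (ε/4) (hp.choose/4)
        rw [hrdef]; linarith
      refine ⟨h1, h2, ?_, ?_⟩
      · have := D_mono_of_subset (Set.inter_subset_inter_left A hsubρ)
        refine this.trans ?_
        calc Cardinal.aleph0 * D (Metric.ball p hp.choose ∩ A)
            ≤ Cardinal.aleph0 * ν n := mul_le_mul' le_rfl hρD
          _ = ν n := Cardinal.aleph0_mul_eq (hνinf n)
      · rw [Set.eq_empty_iff_forall_notMem]
        intro w hw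
        rw [Set.eq_empty_iff_forall_notMem] at hρU
        exact hρU w ⟨hsubρ hw.1, hw.2⟩
    have hVnP : ∀ p ∈ Vn n, P p := fun p hp => hp.2
    set Fnew : Set (M × ℝ) := (fun p => (p, rch p)) '' N₁ with hFnew
    set W : Set M := ⋃ (p : N₁), (Metric.ball (p : M) (2 * rch (p : M)) ∩ A) with hW
    have hmemN₁ : ∀ p ∈ N₁, p ∈ Vn n := fun p hp => hNVn (hN₁N hp)
    have hDW : D W < Γ := by
      rcases isEmpty_or_nonempty N₁ with hem | hne
      · have hWe : W = ∅ := by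
          rw [hW]
          exact Set.iUnion_of_empty _
        rw [hWe, D_empty]
        exact Cardinal.aleph0_pos.trans hΓinf
      · have h1 : D W ≤ Cardinal.mk N₁ * ⨆ p : N₁, D (Metric.ball (p:M) (2 * rch (p:M)) ∩ A) :=
          D_iUnion _
        have h2 : (⨆ p : N₁, D (Metric.ball (p:M) (2 * rch (p:M)) ∩ A)) ≤ ν n :=
          ciSup_le' fun p => (hrspec (p:M) (hVnP _ (hmemN₁ _ p.2))).2.2.1
        refine (h1.trans (mul_le_mul' le_rfl h2)).trans_lt ?_
        rw [hN₁mk]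
        exact Cardinal.mul_lt_of_lt hΓinf.le (hμΓ k) (hνΓ n)
    have hmemFnew : ∀ z ∈ Fnew, ∃ p ∈ N₁, z = (p, rch p) := by
      intro z hz
      obtain ⟨p, hp, hpz⟩ := hz
      exact ⟨p, hp, hpz.symm⟩
    have hPmem : ∀ p ∈ N₁, P p := fun p hp => hVnP _ (hmemN₁ _ hp)
    refine ⟨F ∪ Fnew, U ∪ W, ⟨?_, ?_, ?_⟩, Set.subset_union_left, ?_⟩
    · -- well-formedness
      intro z hz
      rcases hz with hz | hz
      · obtain ⟨h1, h2, h3, h4⟩ := hwf z hz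
        exact ⟨h1, h2, h3.trans Set.subset_union_left, Set.subset_union_left h4⟩
      · obtain ⟨p, hp, rfl⟩ := hmemFnew z hz
        have hVp := hmemN₁ p hp
        have hApos := hrspec p (hPmem p hp)
        have hpA : p ∈ A := hVp.1.1
        have hball : Metric.ball p (2 * rch p) ∩ A ⊆ W := by
          rw [hW]
          exact Set.subset_iUnion
            (fun q : N₁ => Metric.ball (q:M) (2 * rch (q:M)) ∩ A) ⟨p, hp⟩
        refine ⟨hpA, hApos.1, hball.trans Set.subset_union_right, ?_⟩
        refine Set.subset_union_right (hball ⟨Metric.mem_ball_self ?_, hpA⟩)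
        have := hApos.1
        linarith
    · -- separation
      intro z hz w hw hzw
      have key : ∀ z' ∈ F, ∀ p ∈ N₁, 2 * z'.2 ≤ dist z'.1 p ∧ 2 * rch p ≤ dist z'.1 p := by
        intro z' hz' p hp
        obtain ⟨hz'A, hz'pos, hz'ball, hz'U⟩ := hwf z' hz'
        have hVp := hmemN₁ p hp
        have hpA : p ∈ A := hVp.1.1
        have hpnotU : p ∉ U := fun hmem => hVp.1.2 (subset_closure hmem)
        constructor
        · by_contra hcon
          push_neg at hcon
          have : p ∈ Metric.ball z'.1 (2 * z'.2) ∩ A := by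
            constructor
            · rw [Metric.mem_ball, dist_comm]; exact hcon
            · exact hpA
          exact hpnotU (hz'ball this)
        · by_contra hcon
          push_neg at hcon
          have hU : Metric.ball p (2 * rch p) ∩ closure U = ∅ := (hrspec p (hPmem p hp)).2.2.2
          rw [Set.eq_empty_iff_forall_notMem] at hU
          refine hU z'.1 ⟨?_, subset_closure hz'U⟩
          rw [Metric.mem_ball]
          exact hcon
      rcases hz with hz | hz <;> rcases hw with hw | hw
      · exact hsep z hz w hw hzw
      · obtain ⟨p, hp, rfl⟩ := hmemFnew w hw
        obtain ⟨h1, h2⟩ := key z hz p hp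
        show z.2 + rch p ≤ dist z.1 p
        linarith
      · obtain ⟨p, hp, rfl⟩ := hmemFnew z hz
        obtain ⟨h1, h2⟩ := key w hw p hp
        show rch p + w.2 ≤ dist p w.1
        rw [dist_comm]
        linarith
      · obtain ⟨p, hp, rfl⟩ := hmemFnew z hz
        obtain ⟨q, hq, rfl⟩ := hmemFnew w hw
        have hpq : p ≠ q := fun h => hzw (by rw [h])
        have hd : ε ≤ dist p q := hNsep (hN₁N hp) (hN₁N hq) hpq
        have hr1 := (hrspec p (hPmem p hp)).2.1
        have hr2 := (hrspec q (hPmem q hq)).2.1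
        have hεpos := hε
        show rch p + rch q ≤ dist p q
        linarith
    · -- density of the new used region
      refine (D_union U W).trans_lt ?_
      exact Cardinal.add_lt_of_lt hΓinf.le hDU hDW
    · -- cardinality
      have hinj : Function.Injective (fun p : M => (p, rch p)) := fun a b hab =>
        congrArg Prod.fst hab
      have : Cardinal.mk Fnew = μ k := by
        rw [hFnew, Cardinal.mk_image_eq_of_injOn _ _ hinj.injOn, hN₁mk]
      rw [← this]
      exact Cardinal.mk_le_mk_of_subset Set.subset_union_right
  -- restate the step with a packaged conclusion
  have bstep' : ∀ (q : {q : Set (M × ℝ) × Set M // Inv q.1 q.2}) (k : ℕ),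
      ∃ q' : {q : Set (M × ℝ) × Set M // Inv q.1 q.2},
        q.1.1 ⊆ q'.1.1 ∧ μ k ≤ Cardinal.mk q'.1.1 := by
    intro q k
    obtain ⟨F', U', hInv', hsub, hmk⟩ := bstep q.1.1 q.1.2 q.2 k
    exact ⟨⟨(F', U'), hInv'⟩, hsub, hmk⟩
  have hInv0 : Inv ∅ ∅ := by
    refine ⟨by simp, by simp, ?_⟩
    rw [D_empty]
    exact Cardinal.aleph0_pos.trans hΓinf
  set st : ℕ → {q : Set (M × ℝ) × Set M // Inv q.1 q.2} := fun k =>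
    Nat.rec ⟨(∅, ∅), hInv0⟩ (fun k t => (bstep' t k).choose) k with hst
  have hstp : ∀ k, (st k).1.1 ⊆ (st (k+1)).1.1 ∧ μ k ≤ Cardinal.mk (st (k+1)).1.1 :=
    fun k => (bstep' (st k) k).choose_spec
  have hmono : ∀ k l, k ≤ l → (st k).1.1 ⊆ (st l).1.1 := by
    intro k l hkl
    induction l, hkl using Nat.le_induction with
    | base => exact subset_rfl
    | succ m _ ih => exact ih.trans (hstp m).1
  refine ⟨⋃ k, (st k).1.1, ⟨?_, ?_⟩, ?_⟩
  · intro z hz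
    obtain ⟨k, hk⟩ := Set.mem_iUnion.1 hz
    obtain ⟨h1, h2, _, _⟩ := (st k).2.1 z hk
    exact ⟨h1, h2⟩
  · intro z hz w hw hzw
    obtain ⟨k, hk⟩ := Set.mem_iUnion.1 hz
    obtain ⟨l, hl⟩ := Set.mem_iUnion.1 hw
    rcases le_total k l with h | h
    · exact (st l).2.2.1 z (hmono k l h hk) w hl hzw
    · exact (st k).2.2.1 z hk w (hmono l k h hl) hzw
  · refine hμsup.trans (ciSup_le ?_)
    intro k
    refine (hstp k).2.trans (Cardinal.mk_le_mk_of_subset ?_)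
    exact Set.subset_iUnion (fun k => ((st k).1.1 : Set (M × ℝ))) (k+1)

lemma exists_sepFam {A : Set M} (hinf : Cardinal.aleph0 ≤ D A) :
    ∃ F : Set (M × ℝ), IsSepFam A F ∧ D A ≤ Cardinal.mk F := by
  classical
  set Γ := D A with hΓ
  obtain ⟨T, hTA, hTsep, hsup⟩ := D_le_sup_nets A
  by_cases hone : ∃ n, Γ ≤ Cardinal.mk (T n)
  · obtain ⟨n, hn⟩ := hone
    set r : ℝ := 1/(3*((n:ℝ)+1)) with hr
    have hrpos : 0 < r := by positivity
    refine ⟨(fun p => (p, r)) '' T n, ⟨?_, ?_⟩, ?_⟩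
    · rintro z ⟨p, hp, rfl⟩
      exact ⟨hTA n hp, hrpos⟩
    · rintro z ⟨p, hp, rfl⟩ w ⟨q, hq, rfl⟩ hzw
      have hpq : p ≠ q := fun h => hzw (by rw [h])
      have hd : 1/((n:ℝ)+1) ≤ dist p q := hTsep n hp hq hpq
      show r + r ≤ dist p q
      rw [hr]
      have hpos : (0:ℝ) < (n:ℝ)+1 := by positivity
      rw [← add_div, div_le_iff₀ (by positivity)]
      have hd2 : 1 ≤ dist p q * ((n:ℝ)+1) := by
        rw [div_le_iff₀ hpos] at hd
        linarith
      nlinarith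
    · have hinj : Function.Injective (fun p : M => (p, r)) := fun a b hab =>
        congrArg Prod.fst hab
      rw [Cardinal.mk_image_eq_of_injOn _ _ hinj.injOn]
      exact hn
  · push_neg at hone
    by_cases hℵ : Γ ≤ Cardinal.aleph0
    · have hΓa : Γ = Cardinal.aleph0 := le_antisymm hℵ hinf
      have hAinf : A.Infinite := by
        intro hfin
        have : D A ≤ Cardinal.mk A := D_le_mk A
        have h2 : Cardinal.mk A < Cardinal.aleph0 := hfin.lt_aleph0
        exact absurd (hinf.trans this) (not_le.2 h2)
      obtain ⟨F, hF, hFmk⟩ := exists_sepFam_of_infinite hAinf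
      exact ⟨F, hF, hΓa ▸ hFmk⟩
    · have hΓinf : Cardinal.aleph0 < Γ := not_le.1 hℵ
      have hsupκ : Γ ≤ ⨆ n, Cardinal.mk (T n) := le_of_aleph0_mul hΓinf hsup
      have hsucc : ∀ d : Cardinal.{u}, d < Γ → Order.succ d < Γ := by
        intro d hd
        obtain ⟨n, hn⟩ := exists_lt_of_lt_iSup hsupκ hd
        exact lt_of_le_of_lt (Order.succ_le_of_lt hn) (hone n)
      set μ : ℕ → Cardinal.{u} := fun k => Order.succ (max (Cardinal.mk (T k)) Cardinal.aleph0)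
        with hμ
      have hμreg : ∀ k, (μ k).IsRegular := fun k => Cardinal.isRegular_succ (le_max_right _ _)
      have hμinf : ∀ k, Cardinal.aleph0 < μ k := fun k =>
        lt_of_le_of_lt (le_max_right _ _) (Order.lt_succ _)
      have hμΓ : ∀ k, μ k < Γ := fun k => hsucc _ (max_lt (hone k) hΓinf)
      have hμsup : Γ ≤ ⨆ k, μ k := by
        refine hsupκ.trans (ciSup_mono (Cardinal.bddAbove_range _) ?_)
        intro k
        exact le_trans (le_max_left _ _) (Order.le_succ _)
      by_cases hx : ∃ x : M, ∀ ρ : ℝ, 0 < ρ → Γ ≤ D (Metric.ball x ρ ∩ A)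
      · obtain ⟨x, hxx⟩ := hx
        exact casea hΓ hΓinf μ hμreg hμinf hμΓ hμsup x hxx
      · push_neg at hx
        set ν : ℕ → Cardinal.{u} := fun n => max (Cardinal.mk (T n)) Cardinal.aleph0 with hν
        have hνinf : ∀ n, Cardinal.aleph0 ≤ ν n := fun n => le_max_right _ _
        have hνΓ : ∀ n, ν n < Γ := fun n => max_lt (hone n) hΓinf
        have hνcof : ∀ d : Cardinal.{u}, d < Γ → ∃ n, d ≤ ν n := by
          intro d hd
          obtain ⟨n, hn⟩ := exists_lt_of_lt_iSup hsupκ hd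
          exact ⟨n, hn.le.trans (le_max_left _ _)⟩
        have hx' : ∀ y : M, ∃ ρ : ℝ, 0 < ρ ∧ D (Metric.ball y ρ ∩ A) < Γ := by
          intro y
          obtain ⟨ρ, hρpos, hρ⟩ := hx y
          exact ⟨ρ, hρpos, hρ⟩
        exact caseb hΓ hΓinf μ hμreg hμinf hμΓ hμsup ν hνinf hνΓ hνcof hx'

end DevD

/-- If `dens(M') = Γ` for an infinite cardinal `Γ`, then `SNA(M)` contains a linear
subspace isometric to `c₀(Γ)`: indexing by a type `ι` of cardinality `Γ`, there is a
family `(f γ)` vanishing at the base point such that each `c₀(ι)`-combination has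
Lipschitz norm `sup |λ γ|` and, if nonzero, strongly attains it. -/
theorem stmt16 {M : Type u} [MetricSpace M] (z₀ : M) (ι : Type u)
    (hι : Cardinal.mk ι = setDensChar (accPts M))
    (hinf : Cardinal.aleph0 ≤ Cardinal.mk ι) :
    ∃ f : ι → M → ℝ,
      (∀ γ, f γ z₀ = 0) ∧
      ∀ lam : ι → ℝ, (∀ ε > (0 : ℝ), {γ : ι | ε ≤ |lam γ|}.Finite) →
        LipNormEq (fun z => ∑' γ, lam γ * f γ z) (⨆ γ, |lam γ|) ∧
        (lam ≠ 0 → ∃ p q : M, p ≠ q ∧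
          |(∑' γ, lam γ * f γ p) - (∑' γ, lam γ * f γ q)| = (⨆ γ, |lam γ|) * dist p q) := by
  classical
  have hne : Nonempty ι := by
    by_contra h
    rw [not_nonempty_iff] at h
    rw [Cardinal.mk_eq_zero ι] at hinf
    exact Cardinal.aleph0_ne_zero (le_antisymm hinf (zero_le))
  obtain ⟨F, ⟨hwf, hsepF⟩, hmkF⟩ := DevD.exists_sepFam (A := accPts M) (hι ▸ hinf)
  have hemb : Nonempty (ι ↪ F) := by
    rw [← Cardinal.le_def]
    exact hι.le.trans hmkF
  obtain ⟨e⟩ := hemb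
  set pts : ι → M := fun i => ((e i : M × ℝ)).1 with hpts
  set rad : ι → ℝ := fun i => ((e i : M × ℝ)).2 with hraddef
  have hacc : ∀ i, pts i ∈ accPts M := fun i => (hwf _ (e i).2).1
  have hradpos : ∀ i, 0 < rad i := fun i => (hwf _ (e i).2).2
  have hsep : ∀ i j, i ≠ j → rad i + rad j ≤ dist (pts i) (pts j) := by
    intro i j hij
    refine hsepF _ (e i).2 _ (e j).2 ?_
    intro h
    exact hij (e.injective (Subtype.ext h))
  -- the bump functions
  set bump : ι → M → ℝ := fun i z => max 0 (rad i - dist z (pts i)) with hbump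
  have hb_nonneg : ∀ i z, 0 ≤ bump i z := fun i z => le_max_left _ _
  have hb_le : ∀ i z, bump i z ≤ rad i - dist z (pts i) ∨ bump i z = 0 := by
    intro i z
    rcases le_total (rad i - dist z (pts i)) 0 with h | h
    · right; rw [hbump]; simp only [max_eq_left h]
    · left; rw [hbump]; simp only [max_eq_right h]; exact le_rfl
  have hb_pos : ∀ i z, 0 < bump i z → dist z (pts i) < rad i := by
    intro i z h
    by_contra hcon
    push_neg at hcon
    rw [hbump] at h
    simp only [max_eq_left (by linarith : rad i - dist z (pts i) ≤ 0)] at h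
    exact lt_irrefl _ h
  have hb_eq : ∀ i z, dist z (pts i) < rad i → bump i z = rad i - dist z (pts i) := by
    intro i z h
    rw [hbump]
    simp only [max_eq_right (by linarith : (0:ℝ) ≤ rad i - dist z (pts i))]
  have hb_zero : ∀ i z, rad i ≤ dist z (pts i) → bump i z = 0 := by
    intro i z h
    rw [hbump]
    simp only [max_eq_left (by linarith : rad i - dist z (pts i) ≤ 0)]
  have hb_lip : ∀ i z w, |bump i z - bump i w| ≤ dist z w := by
    intro i z w
    have h1 : dist w (pts i) ≤ dist w z + dist z (pts i) := dist_triangle _ _ _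
    have h2 : dist z (pts i) ≤ dist z w + dist w (pts i) := dist_triangle _ _ _
    rw [abs_sub_le_iff]
    constructor
    · rcases hb_le i z with hz | hz
      · have := hb_nonneg i w
        rcases hb_le i w with hw | hw
        · have hw2 : rad i - dist w (pts i) ≤ bump i w := le_max_right _ _
          rw [dist_comm w z] at h1
          linarith
        · -- bump i w = 0 means rad i ≤ dist w pts i
          have hw2 : rad i - dist w (pts i) ≤ bump i w := le_max_right _ _
          rw [dist_comm w z] at h1
          linarith
      · have := hb_nonneg i w
        have := dist_nonneg (x := z) (y := w)
        linarith
    · rcases hb_le i w with hw | hw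
      · have hz2 : rad i - dist z (pts i) ≤ bump i z := le_max_right _ _
        linarith
      · have := hb_nonneg i z
        have := dist_nonneg (x := z) (y := w)
        linarith
  have hb_disj : ∀ i j z, 0 < bump i z → 0 < bump j z → i = j := by
    intro i j z hi hj
    by_contra hij
    have h1 := hb_pos i z hi
    have h2 := hb_pos j z hj
    have h3 := hsep i j hij
    have h4 : dist (pts i) (pts j) ≤ dist (pts i) z + dist z (pts j) := dist_triangle _ _ _
    rw [dist_comm (pts i) z] at h4
    linarith
  -- singleton support
  have hsupp_sub : ∀ z, {i | bump i z ≠ 0}.Subsingleton := by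
    intro z i hi j hj
    simp only [Set.mem_setOf_eq] at hi hj
    exact hb_disj i j z (lt_of_le_of_ne (hb_nonneg i z) (Ne.symm hi))
      (lt_of_le_of_ne (hb_nonneg j z) (Ne.symm hj))
  set f : ι → M → ℝ := fun i z => bump i z - bump i z₀ with hf
  refine ⟨f, fun i => sub_self _, ?_⟩
  intro lam hc₀
  set L : ℝ := ⨆ i, |lam i| with hL
  have hbdd : BddAbove (Set.range fun i => |lam i|) := by
    set B : ℝ := 1 + ∑ j ∈ (hc₀ 1 one_pos).toFinset, |lam j| with hB
    have hsum_nonneg : (0:ℝ) ≤ ∑ j ∈ (hc₀ 1 one_pos).toFinset, |lam j| :=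
      Finset.sum_nonneg fun j _ => abs_nonneg _
    refine ⟨B, ?_⟩
    rintro y ⟨i, rfl⟩
    by_cases hi : 1 ≤ |lam i|
    · have hmem : i ∈ (hc₀ 1 one_pos).toFinset := by
        rw [Set.Finite.mem_toFinset]
        exact hi
      have := Finset.single_le_sum (f := fun j => |lam j|)
        (fun j _ => abs_nonneg _) hmem
      rw [hB]; linarith
    · push_neg at hi
      rw [hB]; linarith
  have hLub : ∀ i, |lam i| ≤ L := fun i => le_ciSup hbdd i
  have hL0 : 0 ≤ L := le_trans (abs_nonneg _) (hLub (Classical.arbitrary ι))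
  -- summability
  have hsummb : ∀ z, Summable (fun i => lam i * bump i z) := by
    intro z
    have hfin : {i | lam i * bump i z ≠ 0}.Finite := by
      refine Set.Finite.subset ((hsupp_sub z).finite) ?_
      intro i hi
      simp only [Set.mem_setOf_eq] at hi ⊢
      intro h
      rw [h, mul_zero] at hi
      exact hi rfl
    refine summable_of_ne_finset_zero (s := hfin.toFinset) ?_
    intro i hi
    rw [Set.Finite.mem_toFinset] at hi
    simpa using not_not.1 (by simpa using hi)
  set G : M → ℝ := fun z => ∑' i, lam i * bump i z with hG
  have hgdef : ∀ z : M, (∑' i, lam i * f i z) = G z - G z₀ := by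
    intro z
    rw [hG]
    have : (fun i => lam i * f i z) = fun i => lam i * bump i z - lam i * bump i z₀ := by
      funext i
      rw [hf]
      ring
    rw [this]
    exact Summable.tsum_sub (hsummb z) (hsummb z₀)
  -- evaluation of G
  have hGsingle : ∀ (z : M) (a : ι), (∀ i, i ≠ a → bump i z = 0) → G z = lam a * bump a z := by
    intro z a h
    rw [hG]
    refine tsum_eq_single a ?_
    intro i hi
    rw [h i hi, mul_zero]
  have hGcases : ∀ z : M, ∃ a : ι, G z = lam a * bump a z ∧ (∀ i, i ≠ a → bump i z = 0) := by
    intro z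
    by_cases hex : ∃ a, bump a z ≠ 0
    · obtain ⟨a, ha⟩ := hex
      have hall : ∀ i, i ≠ a → bump i z = 0 := by
        intro i hi
        by_contra hcon
        exact hi (hsupp_sub z hcon ha)
      exact ⟨a, hGsingle z a hall, hall⟩
    · push_neg at hex
      refine ⟨Classical.arbitrary ι, ?_, fun i _ => hex i⟩
      rw [hGsingle z (Classical.arbitrary ι) (fun i _ => hex i)]
  -- Lipschitz bound for G differences
  have hGlip : ∀ L' : ℝ, 0 ≤ L' → (∀ i, |lam i| ≤ L') → ∀ z w : M,
      |G z - G w| ≤ L' * dist z w := by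
    intro L' hL' hLub' z w
    obtain ⟨a, hGa, haz⟩ := hGcases z
    obtain ⟨b, hGb, hbw⟩ := hGcases w
    by_cases hab : a = b
    · subst hab
      rw [hGa, hGb, ← mul_sub, abs_mul]
      have := hb_lip a z w
      have := hLub' a
      have := abs_nonneg (bump a z - bump a w)
      calc |lam a| * |bump a z - bump a w| ≤ L' * |bump a z - bump a w| := by
            apply mul_le_mul_of_nonneg_right (hLub' a) (abs_nonneg _)
        _ ≤ L' * dist z w := mul_le_mul_of_nonneg_left (hb_lip a z w) hL'
    · by_cases haz0 : bump a z = 0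
      · -- G z = 0; use b for both
        have hGz : G z = lam b * bump b z := by
          rw [hGa, haz0, mul_zero]
          rcases eq_or_ne b a with h | h
          · rw [h, haz0, mul_zero]
          · rw [haz b h, mul_zero]
        rw [hGz, hGb, ← mul_sub, abs_mul]
        calc |lam b| * |bump b z - bump b w| ≤ L' * |bump b z - bump b w| :=
              mul_le_mul_of_nonneg_right (hLub' b) (abs_nonneg _)
          _ ≤ L' * dist z w := mul_le_mul_of_nonneg_left (hb_lip b z w) hL'
      · by_cases hbw0 : bump b w = 0
        · have hGw : G w = lam a * bump a w := by
            rw [hGb, hbw0, mul_zero]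
            rw [hbw a hab, mul_zero]
          rw [hGw, hGa, ← mul_sub, abs_mul]
          calc |lam a| * |bump a z - bump a w| ≤ L' * |bump a z - bump a w| :=
                mul_le_mul_of_nonneg_right (hLub' a) (abs_nonneg _)
            _ ≤ L' * dist z w := mul_le_mul_of_nonneg_left (hb_lip a z w) hL'
        · -- both genuinely positive, different indices
          have haz_pos : 0 < bump a z := lt_of_le_of_ne (hb_nonneg a z) (Ne.symm haz0)
          have hbw_pos : 0 < bump b w := lt_of_le_of_ne (hb_nonneg b w) (Ne.symm hbw0)
          have hbz : bump b z = 0 := haz b (fun h => hab h.symm)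
          have haw : bump a w = 0 := hbw a hab
          have hd1 := hb_pos a z haz_pos
          have hd2 := hb_pos b w hbw_pos
          have hsum : bump a z + bump b w ≤ dist z w := by
            rw [hb_eq a z hd1, hb_eq b w hd2]
            have h3 := hsep a b hab
            have h4 : dist (pts a) (pts b) ≤ dist (pts a) z + dist z w + dist w (pts b) :=
              dist_triangle4 _ _ _ _
            rw [dist_comm (pts a) z] at h4
            linarith
          rw [hGa, hGb]
          have habs : |lam a * bump a z - lam b * bump b w| ≤
              |lam a| * bump a z + |lam b| * bump b w := by
            refine (abs_sub _ _).trans ?_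
            rw [abs_mul, abs_mul, abs_of_pos haz_pos, abs_of_pos hbw_pos]
          refine habs.trans ?_
          calc |lam a| * bump a z + |lam b| * bump b w
              ≤ L' * bump a z + L' * bump b w := by
                refine add_le_add ?_ ?_
                · exact mul_le_mul_of_nonneg_right (hLub' a) haz_pos.le
                · exact mul_le_mul_of_nonneg_right (hLub' b) hbw_pos.le
            _ = L' * (bump a z + bump b w) := by ring
            _ ≤ L' * dist z w := mul_le_mul_of_nonneg_left hsum hL'
  -- evaluation at attainment pairs
  have hnear : ∀ i : ι, ∃ q : M, q ≠ pts i ∧ dist (pts i) q < rad i := by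
    intro i
    have := hacc i
    rw [accPts, Set.mem_setOf_eq, Metric.mem_closure_iff] at this
    obtain ⟨q, hq, hqd⟩ := this (rad i) (hradpos i)
    exact ⟨q, hq, hqd⟩
  have heval : ∀ (i : ι) (q : M), dist (pts i) q < rad i →
      G (pts i) - G q = lam i * dist q (pts i) := by
    intro i q hq
    have h1 : ∀ j, j ≠ i → bump j (pts i) = 0 := by
      intro j hj
      apply hb_zero
      have := hsep i j (fun h => hj h.symm)
      have := hradpos i
      linarith
    have h2 : ∀ j, j ≠ i → bump j q = 0 := by
      intro j hj
      apply hb_zero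
      have h3 := hsep i j (fun h => hj h.symm)
      have h4 : dist (pts i) (pts j) ≤ dist (pts i) q + dist q (pts j) := dist_triangle _ _ _
      linarith
    rw [hGsingle (pts i) i h1, hGsingle q i h2]
    rw [hb_eq i (pts i) (by simpa using hradpos i), hb_eq i q (by rwa [dist_comm])]
    rw [dist_self, dist_comm q (pts i)]
    ring
  constructor
  · constructor
    · intro p q
      show |(∑' γ, lam γ * f γ p) - (∑' γ, lam γ * f γ q)| ≤ L * dist p q
      rw [hgdef p, hgdef q]
      have : G p - G z₀ - (G q - G z₀) = G p - G q := by ring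
      rw [this]
      exact hGlip L hL0 hLub p q
    · intro L' hL' hbound
      refine ciSup_le ?_
      intro i
      obtain ⟨q, hq, hqd⟩ := hnear i
      have hval := heval i q hqd
      have := hbound (pts i) q
      simp only [] at this
      rw [hgdef (pts i), hgdef q] at this
      have heq : G (pts i) - G z₀ - (G q - G z₀) = G (pts i) - G q := by ring
      rw [heq, hval, abs_mul] at this
      have hd0 : 0 < dist q (pts i) := by
        rw [dist_comm]
        exact dist_pos.2 (fun h => hq (by rw [h]))
      have hdeq : dist (pts i) q = dist q (pts i) := dist_comm _ _
      rw [hdeq] at this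
      have habs : |dist q (pts i)| = dist q (pts i) := abs_of_pos hd0
      rw [habs] at this
      exact le_of_mul_le_mul_right this hd0
  · intro hlam
    have hexj : ∃ j, lam j ≠ 0 := by
      by_contra hcon
      push_neg at hcon
      exact hlam (funext hcon)
    obtain ⟨j, hj⟩ := hexj
    have hjpos : 0 < |lam j| := abs_pos.2 hj
    set S := (hc₀ |lam j| hjpos).toFinset with hS
    have hjS : j ∈ S := by
      rw [hS, Set.Finite.mem_toFinset]
      exact Set.mem_setOf_eq ▸ le_rfl
    obtain ⟨i₀, hi₀S, hi₀max⟩ := S.exists_max_image (fun i => |lam i|) ⟨j, hjS⟩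
    have hi₀all : ∀ i, |lam i| ≤ |lam i₀| := by
      intro i
      by_cases hiS : i ∈ S
      · exact hi₀max i hiS
      · rw [hS, Set.Finite.mem_toFinset] at hiS
        simp only [Set.mem_setOf_eq, not_le] at hiS
        exact hiS.le.trans (hi₀max j hjS)
    have hLeq : L = |lam i₀| := le_antisymm (ciSup_le hi₀all) (le_ciSup hbdd i₀)
    obtain ⟨q, hq, hqd⟩ := hnear i₀
    refine ⟨pts i₀, q, fun h => hq h.symm, ?_⟩
    show |(∑' γ, lam γ * f γ (pts i₀)) - (∑' γ, lam γ * f γ q)| = L * dist (pts i₀) q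
    rw [hgdef (pts i₀), hgdef q]
    have heq : G (pts i₀) - G z₀ - (G q - G z₀) = G (pts i₀) - G q := by ring
    rw [heq, heval i₀ q hqd, abs_mul, hLeq]
    rw [abs_of_pos (by rw [dist_comm]; exact dist_pos.2 (fun h => hq (by rw [h])) : 0 < dist q (pts i₀))]
    rw [dist_comm q (pts i₀)]
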